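/- For all reals s ≥ 1 and β > 0 there exists a constant C depending only on s and β such that for every integer n ≥ 1, ∑_{j=1}^{∞} 1/((1 + |n − j|)·j^{s+β}) ≤ C/n. -/

import Mathlib

private lemma natdist_cast_real (m n : ℕ) : (Nat.dist m n : ℝ) = |(m : ℝ) - n| := by
  rcases le_total m n with h | h
  · rw [Nat.dist_eq_sub_of_le h, abs_sub_comm,
      abs_of_nonneg (sub_nonneg.2 (by exact_mod_cast h))]
    push_cast [h]
    ring
  · rw [Nat.dist_eq_sub_of_le_right h,
      abs_of_nonneg (sub_nonneg.2 (by exact_mod_cast h))]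
    push_cast [h]
    ring

private lemma G_summable {p : ℝ} (hp : 1 < p) :
    Summable (fun k : ℕ => 1 / (1 + (k : ℝ)) ^ p) := by
  have h := (Real.summable_one_div_nat_rpow (p := p)).2 hp
  have h2 := (summable_nat_add_iff (f := fun n : ℕ => 1 / (n : ℝ) ^ p) 1).2 h
  convert h2 using 2 with k
  rfl
  push_cast
  ring_nf

/-- Key pointwise bound. -/
private lemma key_bound {p : ℝ} (hp : 1 ≤ p) (n j : ℕ) (hn : 1 ≤ n) :
    1 / ((1 + |(n : ℝ) - ((j : ℝ) + 1)|) * ((j : ℝ) + 1) ^ p) ≤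
      (2 * 3 ^ p / n) *
        (1 / ((j : ℝ) + 1) ^ p + 1 / (1 + (Nat.dist (j + 1) n : ℝ)) ^ p) := by
  have hd : |(n : ℝ) - ((j : ℝ) + 1)| = (Nat.dist (j + 1) n : ℝ) := by
    rw [natdist_cast_real, abs_sub_comm]
    push_cast
    ring_nf
  set a : ℝ := 1 + |(n : ℝ) - ((j : ℝ) + 1)| with ha
  set b : ℝ := (j : ℝ) + 1 with hb
  have hb1 : (1 : ℝ) ≤ b := by have := Nat.cast_nonneg (α := ℝ) j; linarith
  have hbpos : (0 : ℝ) < b := by linarith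
  have hapos : (0 : ℝ) < a := by positivity
  have hbp : (0 : ℝ) < b ^ p := Real.rpow_pos_of_pos hbpos p
  have hap : (0 : ℝ) < a ^ p := Real.rpow_pos_of_pos hapos p
  have hnpos : (0 : ℝ) < n := by exact_mod_cast hn
  have h3p : (1 : ℝ) ≤ 3 ^ p := Real.one_le_rpow (by norm_num) (by linarith)
  have hgoal : (n : ℝ) * (1 / (a * b ^ p)) ≤ 2 * 3 ^ p * (1 / b ^ p + 1 / a ^ p) := by
    rcases le_or_gt (n : ℝ) (2 * b) with hcase | hcase
    · -- b large: use the 1/a^p term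
      have hab : a ≤ 3 * b := by
        rcases le_total ((n : ℝ)) b with h | h
        · have : |(n : ℝ) - b| = b - n := by rw [abs_sub_comm, abs_of_nonneg (by linarith)]
          rw [ha, this]; nlinarith
        · have : |(n : ℝ) - b| = (n : ℝ) - b := abs_of_nonneg (by linarith)
          rw [ha, this]; nlinarith
      have key : (n : ℝ) * a ^ (p - 1) ≤ 2 * 3 ^ p * b ^ p := by
        have h1 : a ^ (p - 1) ≤ (3 * b) ^ (p - 1) :=
          Real.rpow_le_rpow (le_of_lt hapos) hab (by linarith)
        have h2 : (3 * b) ^ (p - 1) = 3 ^ (p - 1) * b ^ (p - 1) :=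
          Real.mul_rpow (by norm_num) (le_of_lt hbpos)
        have h3 : (3 : ℝ) ^ (p - 1) ≤ 3 ^ p :=
          Real.rpow_le_rpow_of_exponent_le (by norm_num) (by linarith)
        have h4 : b ^ (p - 1) * b = b ^ p := by
          rw [← Real.rpow_add_one hbpos.ne' (p - 1)]
          congr 1
          ring
        have hb1p : (0 : ℝ) < b ^ (p - 1) := Real.rpow_pos_of_pos hbpos _
        calc (n : ℝ) * a ^ (p - 1) ≤ (2 * b) * (3 ^ (p - 1) * b ^ (p - 1)) := by
              rw [← h2]; exact mul_le_mul hcase h1 (le_of_lt (Real.rpow_pos_of_pos hapos _)) (by positivity)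
          _ = 2 * 3 ^ (p - 1) * (b ^ (p - 1) * b) := by ring
          _ = 2 * 3 ^ (p - 1) * b ^ p := by rw [h4]
          _ ≤ 2 * 3 ^ p * b ^ p := by nlinarith
      have hstep : (n : ℝ) * (1 / (a * b ^ p)) ≤ 2 * 3 ^ p * (1 / a ^ p) := by
        rw [mul_one_div, mul_one_div, div_le_div_iff₀ (by positivity) hap]
        have hap' : a ^ p = a ^ (p - 1) * a := by
          rw [← Real.rpow_add_one hapos.ne' (p - 1)]
          congr 1
          ring
        rw [hap']
        calc (n : ℝ) * (a ^ (p - 1) * a) = ((n : ℝ) * a ^ (p - 1)) * a := by ring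
          _ ≤ (2 * 3 ^ p * b ^ p) * a := by
              exact mul_le_mul_of_nonneg_right key (le_of_lt hapos)
          _ = 2 * 3 ^ p * (a * b ^ p) := by ring
      have : (0 : ℝ) ≤ 2 * 3 ^ p * (1 / b ^ p) := by positivity
      nlinarith [hstep]
    · -- b small: a ≥ n / 2
      have habs : |(n : ℝ) - b| = (n : ℝ) - b := abs_of_nonneg (by linarith)
      have han : (n : ℝ) ≤ 2 * a := by rw [ha, habs]; nlinarith
      have hstep : (n : ℝ) * (1 / (a * b ^ p)) ≤ 2 * 3 ^ p * (1 / b ^ p) := by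
        rw [mul_one_div, mul_one_div, div_le_div_iff₀ (by positivity) hbp]
        calc (n : ℝ) * b ^ p ≤ 2 * a * b ^ p := by nlinarith
          _ ≤ 2 * 3 ^ p * (a * b ^ p) := by nlinarith [mul_pos hapos hbp]
      have : (0 : ℝ) ≤ 2 * 3 ^ p * (1 / a ^ p) := by positivity
      nlinarith [hstep]
  rw [← hd, ← ha, div_mul_eq_mul_div, le_div_iff₀ hnpos, mul_comm]
  exact hgoal

theorem stmt_9 (s β : ℝ) (hs : 1 ≤ s) (hβ : 0 < β) :
    ∃ C : ℝ, ∀ n : ℕ, 1 ≤ n →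
      Summable (fun j : ℕ =>
        1 / ((1 + |(n : ℝ) - ((j : ℝ) + 1)|) * ((j : ℝ) + 1) ^ (s + β))) ∧
      (∑' j : ℕ, 1 / ((1 + |(n : ℝ) - ((j : ℝ) + 1)|) * ((j : ℝ) + 1) ^ (s + β))) ≤
        C / (n : ℝ) := by
  set p := s + β with hpdef
  have hp1 : 1 < p := by linarith
  have hp1' : 1 ≤ p := le_of_lt hp1
  set G : ℕ → ℝ := fun k => 1 / (1 + (k : ℝ)) ^ p with hG
  have hGsum : Summable G := G_summable hp1
  have hGnonneg : ∀ k, 0 ≤ G k := fun k => by positivity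
  set T := ∑' k, G k with hT
  have hTnonneg : 0 ≤ T := tsum_nonneg hGnonneg
  refine ⟨2 * 3 ^ p * (3 * T), fun n hn => ?_⟩
  -- shifted summand
  have hdist : ∀ j : ℕ, Nat.dist (j + 1) n = Nat.dist j (n - 1) := by
    intro j
    simp only [Nat.dist]
    omega
  set H : ℕ → ℝ := fun j => 1 / (1 + (Nat.dist (j + 1) n : ℝ)) ^ p with hH
  have hHG : ∀ j, H j = G (Nat.dist j (n - 1)) := by
    intro j; simp only [hH, hG, hdist j]
  have hHsum : Summable H := by
    rw [← summable_nat_add_iff (n - 1)]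
    have : (fun j => H (j + (n - 1))) = fun j => G j := by
      funext j
      rw [hHG]
      congr 1
      simp only [Nat.dist]
      omega
    rw [this]
    exact hGsum
  have hHnonneg : ∀ j, 0 ≤ H j := fun j => by positivity
  have hHtsum : ∑' j, H j ≤ 2 * T := by
    have hsplit := (Summable.sum_add_tsum_nat_add (f := H) (n - 1) hHsum).symm
    have htail : ∑' j, H (j + (n - 1)) = T := by
      rw [hT]
      congr 1
      funext j
      rw [hHG]
      congr 1
      simp only [Nat.dist]
      omega
    have hhead : ∑ j ∈ Finset.range (n - 1), H j ≤ T := by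
      have heq : ∀ j ∈ Finset.range (n - 1), H j = G ((n - 1) - j) := by
        intro j hj
        rw [hHG]
        congr 1
        simp only [Finset.mem_range] at hj
        simp only [Nat.dist]
        omega
      rw [Finset.sum_congr rfl heq]
      have : ∑ j ∈ Finset.range (n - 1), G ((n - 1) - j)
          = ∑ j ∈ Finset.range (n - 1), G (j + 1) := by
        rw [← Finset.sum_range_reflect]
        apply Finset.sum_congr rfl
        intro j hj
        simp only [Finset.mem_range] at hj
        congr 1
        omega
      rw [this]
      have h1 : ∑ j ∈ Finset.range (n - 1), G (j + 1) ≤ ∑' j, G (j + 1) :=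
        Summable.sum_le_tsum _ (fun i _ => hGnonneg _) ((summable_nat_add_iff 1).2 hGsum)
      have h2 : ∑' j, G (j + 1) ≤ T := by
        have := (Summable.sum_add_tsum_nat_add (f := G) 1 hGsum)
        have h0 : 0 ≤ ∑ i ∈ Finset.range 1, G i := Finset.sum_nonneg fun i _ => hGnonneg i
        linarith [this]
      linarith
    rw [hsplit]
    linarith
  -- the majorant
  set M : ℕ → ℝ := fun j => (2 * 3 ^ p / n) * (G j + H j) with hM
  have hnpos : (0 : ℝ) < n := by exact_mod_cast hn
  have hGj : ∀ j : ℕ, G j = 1 / ((j : ℝ) + 1) ^ p := by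
    intro j; simp only [hG]; ring_nf
  have hMsum : Summable M := ((hGsum.add hHsum).mul_left _)
  have hle : ∀ j : ℕ,
      1 / ((1 + |(n : ℝ) - ((j : ℝ) + 1)|) * ((j : ℝ) + 1) ^ p) ≤ M j := by
    intro j
    have hkb := key_bound hp1' n j hn
    have e1 : (1 : ℝ) + (j : ℝ) = (j : ℝ) + 1 := by ring
    simp only [hM, hG, hH, e1]
    exact hkb
  have hfnonneg : ∀ j : ℕ,
      0 ≤ 1 / ((1 + |(n : ℝ) - ((j : ℝ) + 1)|) * ((j : ℝ) + 1) ^ p) := by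
    intro j
    have : (0:ℝ) < ((j : ℝ) + 1) ^ p := Real.rpow_pos_of_pos (by positivity) p
    positivity
  have hsum : Summable (fun j : ℕ =>
      1 / ((1 + |(n : ℝ) - ((j : ℝ) + 1)|) * ((j : ℝ) + 1) ^ p)) := by
    apply Summable.of_nonneg_of_le hfnonneg hle hMsum
  refine ⟨hsum, ?_⟩
  have h1 : (∑' j : ℕ, 1 / ((1 + |(n : ℝ) - ((j : ℝ) + 1)|) * ((j : ℝ) + 1) ^ p))
      ≤ ∑' j, M j := Summable.tsum_le_tsum hle hsum hMsum
  have h2 : ∑' j, M j = (2 * 3 ^ p / n) * (T + ∑' j, H j) := by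
    rw [hM, tsum_mul_left, Summable.tsum_add hGsum hHsum]
  have h3 : (2 * 3 ^ p / n) * (T + ∑' j, H j) ≤ 2 * 3 ^ p * (3 * T) / n := by
    rw [div_mul_eq_mul_div]
    have hc : (0:ℝ) ≤ 2 * 3 ^ p := by positivity
    have hX : T + ∑' j, H j ≤ 3 * T := by linarith
    gcongr
  calc _ ≤ ∑' j, M j := h1
    _ = _ := h2
    _ ≤ _ := h3
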